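/- Consider a bipartite system whose operators are matrices indexed by (Fin d_S × Fin d_B) × (Fin d_S × Fin d_B) (operators on ℂ^{d_S}⊗ℂ^{d_B}). Let H be Hermitian with spectral decomposition H = ∑_{k=1}^{d'} E_k Π_k. For j = 1,2, let φ_j ∈ ℂ^{d_S} and χ_j ∈ ℂ^{d_B} be unit vectors and let ψ_j := (φ_j φ_j†) ⊗ (χ_j χ_j†) be the corresponding pure product states. Set p_k^{(j)} := Tr(Π_k ψ_j), ω^{S(j)} := Tr_B( ∑_{k=1}^{d'} Π_k ψ_j Π_k ), and R_j := ∑_{k : p_k^{(j)} > 0} p_k^{(j)} · D( Tr_B(Π_k ψ_j Π_k)/p_k^{(j)}, φ_j φ_j† ) (the effective entanglement in the eigenbasis). Then D( ω^{S(1)}, ω^{S(2)} ) ≥ D( φ_1 φ_1†, φ_2 φ_2† ) − R_1 − R_2. -/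

import Mathlib

open Matrix Complex
open scoped ComplexOrder Kronecker Classical

/-- The partial trace over the bath `B` of an operator on `ℂ^{d_S} ⊗ ℂ^{d_B}`. -/
noncomputable def ptraceB {dS dB : ℕ}
    (M : Matrix (Fin dS × Fin dB) (Fin dS × Fin dB) ℂ) : Matrix (Fin dS) (Fin dS) ℂ :=
  Matrix.of fun i j => ∑ b : Fin dB, M (i, b) (j, b)

/-- The trace norm `‖M‖₁ = Tr √(Mᴴ M)` of a matrix. -/
noncomputable def traceNorm {n : Type*} [Fintype n] [DecidableEq n] (M : Matrix n n ℂ) : ℝ :=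
  (((Matrix.posSemidef_conjTranspose_mul_self M).1.eigenvectorUnitary.1 *
      diagonal (((↑) : ℝ → ℂ) ∘ (√·) ∘ (Matrix.posSemidef_conjTranspose_mul_self M).1.eigenvalues) *
      (star (Matrix.posSemidef_conjTranspose_mul_self M).1.eigenvectorUnitary : Matrix n n ℂ)).trace).re

/-- The trace distance `½ ‖ρ - σ‖₁`. -/
noncomputable def traceDist {n : Type*} [Fintype n] [DecidableEq n] (ρ σ : Matrix n n ℂ) : ℝ :=
  (1 / 2) * traceNorm (ρ - σ)

variable {n : Type*} [Fintype n] [DecidableEq n]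

open scoped MatrixOrder in
lemma traceNorm_sqrt (M : Matrix n n ℂ) : traceNorm M = (CFC.sqrt (Mᴴ * M)).trace.re := by
  have h := Matrix.posSemidef_conjTranspose_mul_self M
  rw [CFC.sqrt_eq_real_sqrt _ h.nonneg, cfcₙ_eq_cfc, h.1.cfc_eq, IsHermitian.cfc,
    Unitary.conjStarAlgAut_apply, traceNorm]
  rfl

open scoped MatrixOrder in
lemma sqrt_psd (M : Matrix n n ℂ) : (CFC.sqrt (Mᴴ * M)).PosSemidef :=
  (CFC.sqrt_nonneg _).posSemidef

open scoped MatrixOrder in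
lemma sq_sqrt' (M : Matrix n n ℂ) : CFC.sqrt (Mᴴ * M) ^ 2 = Mᴴ * M := by
  rw [pow_two, CFC.sqrt_mul_sqrt_self _ (Matrix.posSemidef_conjTranspose_mul_self M).nonneg]

open scoped MatrixOrder in
lemma traceNorm_eq {M S : Matrix n n ℂ} (hS : S.PosSemidef) (h : S ^ 2 = Mᴴ * M) :
    traceNorm M = S.trace.re := by
  rw [traceNorm_sqrt, CFC.sqrt_unique (b := S) (by rw [← pow_two, h]) hS.nonneg]

lemma traceNorm_zero : traceNorm (0 : Matrix n n ℂ) = 0 := by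
  rw [traceNorm_eq (Matrix.PosSemidef.zero) (by simp)]
  simp

lemma traceNorm_neg (M : Matrix n n ℂ) : traceNorm (-M) = traceNorm M := by
  have h := (Matrix.posSemidef_conjTranspose_mul_self M)
  rw [traceNorm_eq (M := -M) (sqrt_psd M) (by rw [sq_sqrt']; simp), traceNorm_sqrt]

section herm
variable {A B : Matrix n n ℂ}

lemma trace_mul_diagonal (M : Matrix n n ℂ) (d : n → ℂ) :
    (M * diagonal d).trace = ∑ i, M i i * d i := by
  simp [Matrix.trace, Matrix.mul_diagonal, Matrix.diag]

lemma traceNorm_hermitian (hA : A.IsHermitian) :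
    traceNorm A = ∑ i, |hA.eigenvalues i| := by
  set U : Matrix n n ℂ := (hA.eigenvectorUnitary : Matrix n n ℂ) with hUdef
  have hUU : star U * U = 1 := Unitary.coe_star_mul_self _
  set S : Matrix n n ℂ := U * diagonal (fun i => ((|hA.eigenvalues i| : ℝ) : ℂ)) * star U with hSdef
  have hS : S.PosSemidef := by
    refine (posSemidef_diagonal_iff.mpr fun i => ?_).mul_mul_conjTranspose_same U
    rw [Complex.zero_le_real]
    exact abs_nonneg _
  have hsq : S ^ 2 = Aᴴ * A := by
    rw [hA.eq]
    conv_rhs => rw [hA.spectral_theorem, Unitary.conjStarAlgAut_apply]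
    rw [pow_two, hSdef]
    simp only [Matrix.mul_assoc]
    rw [← Matrix.mul_assoc (star U) U, hUU, Matrix.one_mul,
      ← Matrix.mul_assoc (star U) U, hUU, Matrix.one_mul,
      ← Matrix.mul_assoc (diagonal _), ← Matrix.mul_assoc (diagonal _),
      diagonal_mul_diagonal, diagonal_mul_diagonal]
    congr 2
    funext i
    simp [Function.comp, ← Complex.ofReal_mul, abs_mul_abs_self]
  rw [traceNorm_eq hS hsq, hSdef, Matrix.trace_mul_comm, ← Matrix.mul_assoc, hUU,
    Matrix.one_mul, Matrix.trace_diagonal]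
  simp

lemma abs_diag_le_one {W : Matrix n n ℂ} (hW : W ∈ Matrix.unitaryGroup n ℂ) (i : n) :
    ‖W i i‖ ≤ 1 := by
  have h1 : (W * Wᴴ) i i = 1 := by
    rw [← Matrix.star_eq_conjTranspose, Matrix.mem_unitaryGroup_iff.mp hW]
    simp
  have h2 : ∑ j, Complex.normSq (W i j) = 1 := by
    have := congrArg Complex.re h1
    simpa [Matrix.mul_apply, Complex.normSq, Complex.mul_conj, Complex.normSq_apply] using this
  have h3 : Complex.normSq (W i i) ≤ 1 := by
    rw [← h2]
    exact Finset.single_le_sum (f := fun j => Complex.normSq (W i j))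
      (fun j _ => Complex.normSq_nonneg _) (Finset.mem_univ i)
  have := Complex.sq_norm (W i i)
  nlinarith [norm_nonneg (W i i)]

lemma re_trace_unitary_mul_le (hA : A.IsHermitian) {V : Matrix n n ℂ}
    (hV : V ∈ Matrix.unitaryGroup n ℂ) : ((V * A).trace).re ≤ traceNorm A := by
  set U : Matrix n n ℂ := (hA.eigenvectorUnitary : Matrix n n ℂ) with hUdef
  set W : Matrix n n ℂ := star U * V * U with hWdef
  have hW : W ∈ Matrix.unitaryGroup n ℂ := by
    exact Submonoid.mul_mem _ (Submonoid.mul_mem _ (Unitary.star_mem hA.eigenvectorUnitary.2) hV)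
      hA.eigenvectorUnitary.2
  have htr : (V * A).trace = ∑ i, W i i * (hA.eigenvalues i : ℂ) := by
    conv_lhs => rw [hA.spectral_theorem, Unitary.conjStarAlgAut_apply]
    rw [← Matrix.mul_assoc, ← Matrix.mul_assoc, Matrix.trace_mul_comm, ← Matrix.mul_assoc,
      ← Matrix.mul_assoc, trace_mul_diagonal]
    rfl
  rw [htr, traceNorm_hermitian hA, Complex.re_sum]
  refine Finset.sum_le_sum fun i _ => ?_
  have h1 : ((W i i) * (hA.eigenvalues i : ℂ)).re = (W i i).re * hA.eigenvalues i := by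
    simp [Complex.mul_re]
  rw [h1]
  calc (W i i).re * hA.eigenvalues i ≤ |(W i i).re * hA.eigenvalues i| := le_abs_self _
    _ = |(W i i).re| * |hA.eigenvalues i| := abs_mul _ _
    _ ≤ 1 * |hA.eigenvalues i| := by
        refine mul_le_mul_of_nonneg_right ?_ (abs_nonneg _)
        exact (Complex.abs_re_le_norm _).trans (abs_diag_le_one hW i)
    _ = |hA.eigenvalues i| := one_mul _

end herm

section tri
variable {A B : Matrix n n ℂ}

lemma traceNorm_add_le (hA : A.IsHermitian) (hB : B.IsHermitian) :
    traceNorm (A + B) ≤ traceNorm A + traceNorm B := by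
  have hM : (A + B).IsHermitian := hA.add hB
  set U : Matrix n n ℂ := (hM.eigenvectorUnitary : Matrix n n ℂ) with hUdef
  have hUU : star U * U = 1 := Unitary.coe_star_mul_self _
  set s : n → ℂ := fun i => if 0 ≤ hM.eigenvalues i then 1 else -1 with hsdef
  set W : Matrix n n ℂ := U * diagonal s * star U with hWdef
  have hWmem : W ∈ Matrix.unitaryGroup n ℂ := by
    have hd : diagonal s ∈ Matrix.unitaryGroup n ℂ := by
      rw [Matrix.mem_unitaryGroup_iff, Matrix.star_eq_conjTranspose, diagonal_conjTranspose,
        diagonal_mul_diagonal]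
      convert Matrix.diagonal_one with i
      rw [hsdef]
      by_cases h : 0 ≤ hM.eigenvalues i <;> simp [h]
    exact Submonoid.mul_mem _ (Submonoid.mul_mem _ hM.eigenvectorUnitary.2 hd)
      (Unitary.star_mem hM.eigenvectorUnitary.2)
  have hcan : ∀ X : Matrix n n ℂ, star U * (U * X) = X := fun X => by
    rw [← Matrix.mul_assoc, hUU, Matrix.one_mul]
  have hW1 : W * (A + B) = U * (diagonal (fun i => s i * ((hM.eigenvalues i : ℝ) : ℂ)) * star U) := by
    conv_lhs => rw [hM.spectral_theorem, Unitary.conjStarAlgAut_apply]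
    rw [hWdef]
    simp only [Matrix.mul_assoc]
    rw [hcan, ← Matrix.mul_assoc (diagonal s), diagonal_mul_diagonal]
    rfl
  have key : ((W * (A + B)).trace).re = traceNorm (A + B) := by
    rw [hW1, Matrix.trace_mul_comm, Matrix.mul_assoc, hUU, Matrix.mul_one,
      Matrix.trace_diagonal, traceNorm_hermitian hM, Complex.re_sum]
    refine Finset.sum_congr rfl fun i _ => ?_
    rw [hsdef]
    by_cases h : 0 ≤ hM.eigenvalues i
    · simp [h, _root_.abs_of_nonneg h]
    · push_neg at h
      simp [if_neg (not_le.mpr h), _root_.abs_of_neg h]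
  have expand : ((W * (A + B)).trace).re = ((W * A).trace).re + ((W * B).trace).re := by
    rw [Matrix.mul_add, Matrix.trace_add]
    simp
  rw [← key, expand]
  exact add_le_add (re_trace_unitary_mul_le hA hWmem) (re_trace_unitary_mul_le hB hWmem)

omit [Fintype n] [DecidableEq n] in
lemma isHermitian_finset_sum {ι : Type*} (t : Finset ι) (f : ι → Matrix n n ℂ)
    (hf : ∀ i ∈ t, (f i).IsHermitian) : (∑ i ∈ t, f i).IsHermitian := by
  rw [Matrix.IsHermitian, Matrix.conjTranspose_sum]
  exact Finset.sum_congr rfl fun i hi => hf i hi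

lemma traceNorm_sum_le {ι : Type*} (t : Finset ι) (f : ι → Matrix n n ℂ)
    (hf : ∀ i ∈ t, (f i).IsHermitian) :
    traceNorm (∑ i ∈ t, f i) ≤ ∑ i ∈ t, traceNorm (f i) := by
  classical
  induction t using Finset.induction_on with
  | empty => simp [traceNorm_zero]
  | insert a t' hx ih =>
    rw [Finset.sum_insert hx, Finset.sum_insert hx]
    calc traceNorm (f a + ∑ i ∈ t', f i)
        ≤ traceNorm (f a) + traceNorm (∑ i ∈ t', f i) :=
          traceNorm_add_le (hf a (Finset.mem_insert_self a t'))
            (isHermitian_finset_sum _ _ fun i hi => hf i (Finset.mem_insert_of_mem hi))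
      _ ≤ _ := by
          exact add_le_add le_rfl (ih fun i hi => hf i (Finset.mem_insert_of_mem hi))

open scoped MatrixOrder in
lemma traceNorm_real_smul (c : ℝ) (hc : 0 ≤ c) (A : Matrix n n ℂ) :
    traceNorm (c • A) = c * traceNorm A := by
  have h := Matrix.posSemidef_conjTranspose_mul_self A
  have hS : ((c : ℂ) • CFC.sqrt (Aᴴ * A)).PosSemidef :=
    (sqrt_psd A).smul (Complex.zero_le_real.mpr hc)
  have hsm : c • A = (c : ℂ) • A := by
    ext i j; simp [Complex.real_smul]
  have hsq : ((c : ℂ) • CFC.sqrt (Aᴴ * A)) ^ 2 = (c • A)ᴴ * (c • A) := by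
    rw [hsm, smul_pow, sq_sqrt', Matrix.conjTranspose_smul, Matrix.smul_mul, Matrix.mul_smul,
      smul_smul]
    congr 1
    simp [pow_two, Complex.star_def, Complex.conj_ofReal]
  rw [traceNorm_eq hS hsq, Matrix.trace_smul]
  simp [traceNorm_sqrt]

end tri

section aux
variable {dS dB : ℕ}

lemma ptraceB_sum {ι : Type*} (t : Finset ι)
    (f : ι → Matrix (Fin dS × Fin dB) (Fin dS × Fin dB) ℂ) :
    ptraceB (∑ i ∈ t, f i) = ∑ i ∈ t, ptraceB (f i) := by
  ext i j
  simp only [ptraceB, Matrix.sum_apply, Matrix.of_apply]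
  rw [Finset.sum_comm]

lemma ptraceB_zero : ptraceB (0 : Matrix (Fin dS × Fin dB) (Fin dS × Fin dB) ℂ) = 0 := by
  ext i j; simp [ptraceB]

lemma ptraceB_isHermitian {M : Matrix (Fin dS × Fin dB) (Fin dS × Fin dB) ℂ}
    (hM : M.IsHermitian) : (ptraceB M).IsHermitian := by
  ext i j
  have h : ∀ x y, star (M y x) = M x y := fun x y => congrFun (congrFun hM x) y
  simp [Matrix.conjTranspose_apply, ptraceB, h]

lemma vecMulVec_star_isHermitian {m : Type*} (v : m → ℂ) :
    (vecMulVec v (star v)).IsHermitian := by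
  ext i j
  simp [Matrix.conjTranspose_apply, vecMulVec_apply, mul_comm]

lemma real_smul_isHermitian {m : Type*} {A : Matrix m m ℂ} (c : ℝ) (hA : A.IsHermitian) :
    (c • A).IsHermitian := by
  ext i j
  have h : star (A j i) = A i j := congrFun (congrFun hA i) j
  simp [Matrix.conjTranspose_apply, ← h, Complex.real_smul]

lemma conj_vecMulVec {m : Type*} [Fintype m] {P : Matrix m m ℂ} (hP : P.IsHermitian)
    (v : m → ℂ) : P * vecMulVec v (star v) * P = vecMulVec (P *ᵥ v) (star (P *ᵥ v)) := by
  rw [vecMulVec_eq Unit, vecMulVec_eq Unit, Matrix.star_mulVec, hP.eq]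
  rw [Matrix.replicateCol_mulVec, Matrix.replicateRow_vecMul]
  simp only [Matrix.mul_assoc]

lemma trace_P_vecMulVec {m : Type*} [Fintype m] (P : Matrix m m ℂ) (v : m → ℂ) :
    (P * vecMulVec v (star v)).trace = star v ⬝ᵥ (P *ᵥ v) := by
  simp only [Matrix.trace, Matrix.diag, Matrix.mul_apply, vecMulVec_apply, dotProduct,
    Matrix.mulVec, Pi.star_apply, Finset.mul_sum]
  refine Finset.sum_congr rfl fun a _ => Finset.sum_congr rfl fun x _ => by ring

lemma dot_proj {m : Type*} [Fintype m] {P : Matrix m m ℂ} (hP : P.IsHermitian)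
    (hPP : P * P = P) (v : m → ℂ) :
    star (P *ᵥ v) ⬝ᵥ (P *ᵥ v) = star v ⬝ᵥ (P *ᵥ v) := by
  rw [Matrix.star_mulVec, hP.eq, ← Matrix.dotProduct_mulVec, Matrix.mulVec_mulVec, hPP]

lemma dot_self_re_nonneg {m : Type*} [Fintype m] (v : m → ℂ) :
    (star v ⬝ᵥ v) = ((∑ x, Complex.normSq (v x) : ℝ) : ℂ) := by
  simp [dotProduct, Complex.normSq_eq_conj_mul_self]

end aux

/-- **Distinguishability of dephased states** (absence of initial state independence for
Hamiltonians with little entanglement in the eigenbasis). -/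
theorem distinguishability_of_dephased_states {dS dB d' : ℕ}
    (H : Matrix (Fin dS × Fin dB) (Fin dS × Fin dB) ℂ) (hH : H.IsHermitian)
    (E : Fin d' → ℝ) (hE : StrictMono E)
    (P : Fin d' → Matrix (Fin dS × Fin dB) (Fin dS × Fin dB) ℂ)
    (hPherm : ∀ k, (P k).IsHermitian)
    (hPorth : ∀ k l, P k * P l = if k = l then P k else 0)
    (hPsum : ∑ k, P k = 1)
    (hHspec : H = ∑ k, (E k : ℂ) • P k)
    (φ : Fin 2 → (Fin dS → ℂ)) (χ : Fin 2 → (Fin dB → ℂ))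
    (hφ : ∀ j, star (φ j) ⬝ᵥ φ j = 1) (hχ : ∀ j, star (χ j) ⬝ᵥ χ j = 1)
    (ψ : Fin 2 → Matrix (Fin dS × Fin dB) (Fin dS × Fin dB) ℂ)
    (hψ : ∀ j, ψ j = (vecMulVec (φ j) (star (φ j))) ⊗ₖ (vecMulVec (χ j) (star (χ j))))
    (p : Fin 2 → Fin d' → ℝ) (hp : ∀ j k, (p j k : ℂ) = (P k * ψ j).trace)
    (ωS : Fin 2 → Matrix (Fin dS) (Fin dS) ℂ)
    (hωS : ∀ j, ωS j = ptraceB (∑ k, P k * ψ j * P k))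
    (R : Fin 2 → ℝ)
    (hR : ∀ j, R j = ∑ k ∈ Finset.univ.filter (fun k => 0 < p j k),
        p j k * traceDist ((p j k)⁻¹ • ptraceB (P k * ψ j * P k))
          (vecMulVec (φ j) (star (φ j)))) :
    traceDist (ωS 0) (ωS 1)
      ≥ traceDist (vecMulVec (φ 0) (star (φ 0))) (vecMulVec (φ 1) (star (φ 1)))
        - R 0 - R 1 := by
  classical
  set σ : Fin 2 → Matrix (Fin dS) (Fin dS) ℂ := fun j => vecMulVec (φ j) (star (φ j))
    with hσdef
  have hσeq : ∀ j, vecMulVec (φ j) (star (φ j)) = σ j := fun j => rfl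
  simp only [hσeq] at hR ⊢
  have hσherm : ∀ j, (σ j).IsHermitian := fun j => vecMulVec_star_isHermitian _
  set w : Fin 2 → (Fin dS × Fin dB → ℂ) := fun j x => φ j x.1 * χ j x.2 with hwdef
  have hψw : ∀ j, ψ j = vecMulVec (w j) (star (w j)) := by
    intro j
    rw [hψ]
    ext x y
    simp only [Matrix.kroneckerMap_apply, vecMulVec_apply, Pi.star_apply, star_mul', hwdef]
    ring
  set u : Fin 2 → Fin d' → (Fin dS × Fin dB → ℂ) := fun j k => P k *ᵥ w j with hudef
  have hPP : ∀ k, P k * P k = P k := fun k => by simpa using hPorth k k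
  have hkey : ∀ j k, P k * ψ j * P k = vecMulVec (u j k) (star (u j k)) := fun j k => by
    rw [hψw j, conj_vecMulVec (hPherm k)]
  have hpc : ∀ j k, (p j k : ℂ) = star (w j) ⬝ᵥ (P k *ᵥ w j) := fun j k => by
    rw [hp j k, hψw j, trace_P_vecMulVec]
  have hpu : ∀ j k, (p j k : ℂ) = star (u j k) ⬝ᵥ (u j k) := fun j k =>
    (hpc j k).trans (dot_proj (hPherm k) (hPP k) (w j)).symm
  have hpre : ∀ j k, p j k = ∑ x, Complex.normSq (u j k x) := fun j k => by
    have h2 := (hpu j k).trans (dot_self_re_nonneg (u j k))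
    exact_mod_cast h2
  have hpnn : ∀ j k, 0 ≤ p j k := fun j k => by
    rw [hpre]
    exact Finset.sum_nonneg fun x _ => Complex.normSq_nonneg _
  have huz : ∀ j k, ¬ 0 < p j k → P k * ψ j * P k = 0 := by
    intro j k hnk
    have h0 : p j k = 0 := le_antisymm (not_lt.mp hnk) (hpnn j k)
    have hu0 : u j k = 0 := by
      funext x
      have h3 := hpre j k
      rw [h0] at h3
      have hx : Complex.normSq (u j k x) = 0 :=
        (Finset.sum_eq_zero_iff_of_nonneg (fun x _ => Complex.normSq_nonneg _)).mp h3.symm x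
          (Finset.mem_univ x)
      exact Complex.normSq_eq_zero.mp hx
    rw [hkey j k, hu0]
    ext x y
    simp [vecMulVec_apply]
  set F : Fin 2 → Finset (Fin d') := fun j => Finset.univ.filter (fun k => 0 < p j k) with hFdef
  have hωF : ∀ j, ωS j = ∑ k ∈ F j, ptraceB (P k * ψ j * P k) := by
    intro j
    rw [hωS j, ptraceB_sum]
    symm
    refine Finset.sum_subset (Finset.filter_subset _ _) fun k _ hk => ?_
    rw [Finset.mem_filter] at hk
    push_neg at hk
    rw [huz j k (not_lt.mpr (hk (Finset.mem_univ k))), ptraceB_zero]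
  have hsump : ∀ j, ∑ k ∈ F j, p j k = 1 := by
    intro j
    have h1 : (vecMulVec (w j) (star (w j))).trace
        = (star (φ j) ⬝ᵥ φ j) * (star (χ j) ⬝ᵥ χ j) := by
      simp only [Matrix.trace, Matrix.diag, vecMulVec_apply, Pi.star_apply, dotProduct]
      rw [Finset.sum_mul_sum, ← Fintype.sum_prod_type']
      refine Finset.sum_congr rfl fun x _ => ?_
      simp only [hwdef, star_mul']
      ring
    have hall : ∑ k, (p j k : ℂ) = 1 := by
      calc ∑ k, (p j k : ℂ) = ∑ k, (P k * ψ j).trace := by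
            exact Finset.sum_congr rfl fun k _ => hp j k
        _ = ((∑ k, P k) * ψ j).trace := by rw [Finset.sum_mul, Matrix.trace_sum]
        _ = (ψ j).trace := by rw [hPsum, Matrix.one_mul]
        _ = 1 := by rw [hψw j, h1, hφ j, hχ j, one_mul]
    have hallr : ∑ k, p j k = 1 := by exact_mod_cast hall
    rw [← hallr]
    refine Finset.sum_subset (Finset.filter_subset _ _) fun k _ hk => ?_
    rw [Finset.mem_filter] at hk
    push_neg at hk
    exact le_antisymm (hk (Finset.mem_univ k)) (hpnn j k)
  have hterm_herm : ∀ j k, (ptraceB (P k * ψ j * P k)).IsHermitian := fun j k =>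
    ptraceB_isHermitian (by rw [hkey j k]; exact vecMulVec_star_isHermitian _)
  have hωherm : ∀ j, (ωS j).IsHermitian := fun j => by
    rw [hωF j]
    exact isHermitian_finset_sum _ _ fun k _ => hterm_herm j k
  have hDle : ∀ j, traceDist (ωS j) (σ j) ≤ R j := by
    intro j
    have hdecomp : ωS j - σ j = ∑ k ∈ F j, (ptraceB (P k * ψ j * P k) - p j k • σ j) := by
      rw [Finset.sum_sub_distrib, ← hωF j, ← Finset.sum_smul, hsump j, one_smul]
    have hbound : traceNorm (ωS j - σ j)
        ≤ ∑ k ∈ F j, p j k * traceNorm ((p j k)⁻¹ • ptraceB (P k * ψ j * P k) - σ j) := by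
      rw [hdecomp]
      calc traceNorm (∑ k ∈ F j, (ptraceB (P k * ψ j * P k) - p j k • σ j))
          ≤ ∑ k ∈ F j, traceNorm (ptraceB (P k * ψ j * P k) - p j k • σ j) :=
            traceNorm_sum_le _ _ fun k _ =>
              (hterm_herm j k).sub (real_smul_isHermitian _ (hσherm j))
        _ = _ := by
            refine Finset.sum_congr rfl fun k hk => ?_
            rw [Finset.mem_filter] at hk
            rw [show ptraceB (P k * ψ j * P k) - p j k • σ j
                = p j k • ((p j k)⁻¹ • ptraceB (P k * ψ j * P k) - σ j) by
              rw [smul_sub, smul_inv_smul₀ (ne_of_gt hk.2)]]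
            rw [traceNorm_real_smul _ (hpnn j k)]
    rw [hR j]
    calc traceDist (ωS j) (σ j) = 1 / 2 * traceNorm (ωS j - σ j) := rfl
      _ ≤ 1 / 2 * ∑ k ∈ F j, p j k * traceNorm ((p j k)⁻¹ • ptraceB (P k * ψ j * P k) - σ j) := by
          linarith
      _ = ∑ k ∈ F j, p j k * traceDist ((p j k)⁻¹ • ptraceB (P k * ψ j * P k)) (σ j) := by
          rw [Finset.mul_sum]
          refine Finset.sum_congr rfl fun k _ => ?_
          rw [traceDist]
          ring
  have h01 : σ 0 - σ 1 = (σ 0 - ωS 0) + ((ωS 0 - ωS 1) + (ωS 1 - σ 1)) := by abel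
  have htri : traceNorm (σ 0 - σ 1) ≤ traceNorm (σ 0 - ωS 0)
      + (traceNorm (ωS 0 - ωS 1) + traceNorm (ωS 1 - σ 1)) := by
    rw [h01]
    exact (traceNorm_add_le ((hσherm 0).sub (hωherm 0))
      (((hωherm 0).sub (hωherm 1)).add ((hωherm 1).sub (hσherm 1)))).trans
      (add_le_add le_rfl (traceNorm_add_le ((hωherm 0).sub (hωherm 1))
        ((hωherm 1).sub (hσherm 1))))
  have hsym0 : traceNorm (σ 0 - ωS 0) = traceNorm (ωS 0 - σ 0) := by
    rw [← traceNorm_neg, neg_sub]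
  have e0 := hDle 0
  have e1 := hDle 1
  simp only [traceDist] at e0 e1 ⊢
  linarith
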